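/- A monotone structure M ⊆ F × F* is maximal with respect to the monotonicity property (no strictly larger monotone subspace contains it) if and only if dim M = dim F. -/

import Mathlib

open Module RealInnerProductSpace

variable {n : ℕ}

local notation "Eu" => EuclideanSpace ℝ (Fin n)

lemma core_le (N : Submodule ℝ (Eu × Eu)) (h : ∀ p ∈ N, (0:ℝ) ≤ ⟪p.1, p.2⟫) :
    finrank ℝ N ≤ n := by
  set L : (Eu × Eu) →ₗ[ℝ] Eu := LinearMap.fst ℝ Eu Eu + LinearMap.snd ℝ Eu Eu with hL
  have hinj : Function.Injective (L.comp N.subtype) := by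
    rw [← LinearMap.ker_eq_bot, LinearMap.ker_eq_bot']
    rintro ⟨⟨f, e⟩, hfe⟩ hz
    have hz' : f + e = 0 := by simpa [hL] using hz
    have he : e = -f := by linear_combination (norm := module) hz'
    have h0 := h _ hfe
    simp only at h0
    rw [he] at h0
    have h1 : (0:ℝ) ≤ -⟪f, f⟫ := by simpa using h0
    have hf : f = 0 := by
      have h2 := real_inner_self_nonneg (x := f)
      have h3 : ⟪f, f⟫ = 0 := le_antisymm (by linarith) h2
      exact inner_self_eq_zero.mp h3
    subst hf
    simp only [neg_zero] at he
    subst he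
    rfl
  simpa [finrank_euclideanSpace_fin] using
    LinearMap.finrank_le_finrank_of_injective hinj

lemma core_ext (N : Submodule ℝ (Eu × Eu)) (h : ∀ p ∈ N, (0:ℝ) ≤ ⟪p.1, p.2⟫)
    (hlt : finrank ℝ N < n) :
    ∃ N' : Submodule ℝ (Eu × Eu), (∀ p ∈ N', (0:ℝ) ≤ ⟪p.1, p.2⟫) ∧ N ≤ N' ∧ N' ≠ N := by
  set L : (Eu × Eu) →ₗ[ℝ] Eu := LinearMap.fst ℝ Eu Eu + LinearMap.snd ℝ Eu Eu with hL
  set V : Submodule ℝ Eu := N.map L with hV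
  have hVlt : finrank ℝ V < n := lt_of_le_of_lt (Submodule.finrank_map_le L N) hlt
  have hVne : V ≠ ⊤ := by
    intro htop
    rw [htop, finrank_top, finrank_euclideanSpace_fin] at hVlt
    exact lt_irrefl _ hVlt
  have hbot : Vᗮ ≠ ⊥ := fun hb => hVne (Submodule.orthogonal_eq_bot_iff.mp hb)
  obtain ⟨u, huV, hu0⟩ := Submodule.exists_mem_ne_zero_of_ne_bot hbot
  have huO : ∀ v ∈ V, ⟪v, u⟫ = 0 := (Submodule.mem_orthogonal V u).mp huV
  refine ⟨N ⊔ Submodule.span ℝ {((u, u) : Eu × Eu)}, ?_, le_sup_left, ?_⟩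
  · intro p hp
    obtain ⟨w, hw, q, hq, rfl⟩ := Submodule.mem_sup.mp hp
    obtain ⟨t, rfl⟩ := Submodule.mem_span_singleton.mp hq
    have hwu : ⟪w.1 + w.2, u⟫ = 0 := by
      apply huO
      exact ⟨w, hw, rfl⟩
    have hwu' : ⟪w.1, u⟫ + ⟪w.2, u⟫ = 0 := by rwa [inner_add_left] at hwu
    have hcalc : ⟪(w + t • (u,u)).1, (w + t • (u,u)).2⟫
        = ⟪w.1, w.2⟫ + t * (⟪w.1, u⟫ + ⟪w.2, u⟫) + t^2 * ⟪u, u⟫ := by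
      simp only [Prod.fst_add, Prod.snd_add, Prod.smul_fst, Prod.smul_snd]
      rw [inner_add_left, inner_add_right, inner_add_right, real_inner_smul_left,
        real_inner_smul_left, real_inner_smul_right, real_inner_smul_right,
        real_inner_comm u w.1, real_inner_comm u w.2]
      ring
    rw [hcalc, hwu', mul_zero, add_zero]
    have := h w hw
    have h2 : (0:ℝ) ≤ t^2 * ⟪u, u⟫ := mul_nonneg (sq_nonneg t) real_inner_self_nonneg
    linarith
  · intro heq
    have huu : ((u, u) : Eu × Eu) ∈ N := by
      rw [← heq]
      exact Submodule.mem_sup_right (Submodule.mem_span_singleton_self _)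
    have : u + u ∈ V := ⟨(u, u), huu, rfl⟩
    have h0 : ⟪u + u, u⟫ = 0 := huO _ this
    rw [inner_add_left] at h0
    have : ⟪u, u⟫ = 0 := by linarith [real_inner_self_nonneg (x := u),
      real_inner_self_nonneg (x := u)]
    exact hu0 (inner_self_eq_zero.mp this)

lemma key_inner {F : Type*} [AddCommGroup F] [Module ℝ F]
    (b : Basis (Fin n) ℝ F) (f : F) (e : Module.Dual ℝ F) :
    ⟪(b.equivFun.trans (WithLp.linearEquiv 2 ℝ (Fin n → ℝ)).symm) f,
     (b.dualBasis.equivFun.trans (WithLp.linearEquiv 2 ℝ (Fin n → ℝ)).symm) e⟫ = e f := by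
  have h1 : ∀ i, ((b.equivFun.trans (WithLp.linearEquiv 2 ℝ (Fin n → ℝ)).symm) f : Eu) i
      = b.repr f i := fun i => rfl
  have h2 : ∀ i, ((b.dualBasis.equivFun.trans (WithLp.linearEquiv 2 ℝ (Fin n → ℝ)).symm) e : Eu) i
      = e (b i) := fun i => by
    show b.dualBasis.equivFun e i = e (b i)
    rw [Basis.equivFun_apply, Basis.dualBasis_repr]
  rw [PiLp.inner_apply]
  simp only [h1, h2, RCLike.inner_apply, conj_trivial]
  conv_rhs => rw [← b.sum_repr f]
  rw [map_sum]
  simp [smul_eq_mul]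
  exact Finset.sum_congr rfl fun x _ => mul_comm _ _

theorem maximally_monotone_iff_dim_eq
    (F : Type*) [AddCommGroup F] [Module ℝ F] [FiniteDimensional ℝ F]
    (M : Submodule ℝ (F × Module.Dual ℝ F))
    (hM : ∀ p ∈ M, (0 : ℝ) ≤ p.2 p.1) :
    (∀ M' : Submodule ℝ (F × Module.Dual ℝ F),
        (∀ p ∈ M', (0 : ℝ) ≤ p.2 p.1) → M ≤ M' → M' = M)
      ↔ Module.finrank ℝ M = Module.finrank ℝ F := by
  classical
  obtain ⟨n, hn⟩ : ∃ n, finrank ℝ F = n := ⟨_, rfl⟩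
  rw [hn]
  let b : Basis (Fin n) ℝ F := Module.finBasisOfFinrankEq ℝ F hn
  let φ : F ≃ₗ[ℝ] (EuclideanSpace ℝ (Fin n)) := b.equivFun.trans (WithLp.linearEquiv 2 ℝ (Fin n → ℝ)).symm
  let ψ : Module.Dual ℝ F ≃ₗ[ℝ] (EuclideanSpace ℝ (Fin n)) :=
    b.dualBasis.equivFun.trans (WithLp.linearEquiv 2 ℝ (Fin n → ℝ)).symm
  let Φ : (F × Module.Dual ℝ F) ≃ₗ[ℝ] ((EuclideanSpace ℝ (Fin n)) × (EuclideanSpace ℝ (Fin n))) := LinearEquiv.prodCongr φ ψ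
  have hΦ : ∀ p : F × Module.Dual ℝ F, (Φ p : (EuclideanSpace ℝ (Fin n)) × (EuclideanSpace ℝ (Fin n))) = (φ p.1, ψ p.2) := fun p => rfl
  have hkey : ∀ p : F × Module.Dual ℝ F, ⟪(Φ p).1, (Φ p).2⟫ = p.2 p.1 := by
    intro p
    rw [hΦ]
    exact key_inner b p.1 p.2
  set N : Submodule ℝ ((EuclideanSpace ℝ (Fin n)) × (EuclideanSpace ℝ (Fin n))) := M.map (Φ : (F × Module.Dual ℝ F) →ₗ[ℝ] ((EuclideanSpace ℝ (Fin n)) × (EuclideanSpace ℝ (Fin n)))) with hNdef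
  have hN : ∀ q ∈ N, (0:ℝ) ≤ ⟪q.1, q.2⟫ := by
    rintro q ⟨p, hp, rfl⟩
    rw [LinearEquiv.coe_coe, hkey]
    exact hM p hp
  have hrank : finrank ℝ N = finrank ℝ M := LinearEquiv.finrank_map_eq Φ M
  constructor
  · intro hmax
    have h1 : finrank ℝ M ≤ n := hrank ▸ core_le N hN
    by_contra hne
    have hlt : finrank ℝ N < n := by rw [hrank]; exact lt_of_le_of_ne h1 hne
    obtain ⟨N', hN', hle, hne'⟩ := core_ext N hN hlt
    set M' : Submodule ℝ (F × Module.Dual ℝ F) :=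
      N'.comap (Φ : (F × Module.Dual ℝ F) →ₗ[ℝ] ((EuclideanSpace ℝ (Fin n)) × (EuclideanSpace ℝ (Fin n)))) with hM'def
    have hmono : ∀ p ∈ M', (0:ℝ) ≤ p.2 p.1 := by
      intro p hp
      rw [← hkey p]
      exact hN' _ hp
    have hMle : M ≤ M' := by
      intro p hp
      exact hle ⟨p, hp, rfl⟩
    have heq := hmax M' hmono hMle
    apply hne'
    have hsurj : Function.Surjective (Φ : (F × Module.Dual ℝ F) →ₗ[ℝ] ((EuclideanSpace ℝ (Fin n)) × (EuclideanSpace ℝ (Fin n)))) :=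
      Φ.surjective
    calc N' = Submodule.map (Φ : (F × Module.Dual ℝ F) →ₗ[ℝ] ((EuclideanSpace ℝ (Fin n)) × (EuclideanSpace ℝ (Fin n))))
          (Submodule.comap (Φ : (F × Module.Dual ℝ F) →ₗ[ℝ] ((EuclideanSpace ℝ (Fin n)) × (EuclideanSpace ℝ (Fin n)))) N') :=
          (Submodule.map_comap_eq_of_surjective hsurj N').symm
      _ = Submodule.map (Φ : (F × Module.Dual ℝ F) →ₗ[ℝ] ((EuclideanSpace ℝ (Fin n)) × (EuclideanSpace ℝ (Fin n)))) M := by rw [← hM'def, heq]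
      _ = N := rfl
  · intro hr M' hM' hle
    have hmono : ∀ q ∈ M'.map (Φ : (F × Module.Dual ℝ F) →ₗ[ℝ] ((EuclideanSpace ℝ (Fin n)) × (EuclideanSpace ℝ (Fin n)))), (0:ℝ) ≤ ⟪q.1, q.2⟫ := by
      rintro q ⟨p, hp, rfl⟩
      rw [LinearEquiv.coe_coe, hkey]
      exact hM' p hp
    have heqr : finrank ℝ (M'.map (Φ : (F × Module.Dual ℝ F) →ₗ[ℝ] ((EuclideanSpace ℝ (Fin n)) × (EuclideanSpace ℝ (Fin n))))) = finrank ℝ M' := LinearEquiv.finrank_map_eq Φ M'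
    have h2 : finrank ℝ M' ≤ n := by
      rw [← heqr]; exact core_le (M'.map (Φ : (F × Module.Dual ℝ F) →ₗ[ℝ] ((EuclideanSpace ℝ (Fin n)) × (EuclideanSpace ℝ (Fin n))))) hmono
    exact (Submodule.eq_of_le_of_finrank_le hle (by rw [hr]; exact h2)).symm
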